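/- The group G = ⟨a, b, t | t⁻¹at = b, t⁻¹bt = aba⁻¹⟩ is isomorphic to the semidirect product F₃ ⋊_θ ℤ, where F₃ is free on x, y, z and the generator of ℤ acts by the automorphism θ: x ↦ y, y ↦ z, z ↦ y²x⁻¹. -/

import Mathlib

/-- Generators: `0 = a`, `1 = b`, `2 = t`.  Relations of
`⟨a, b, t | t⁻¹at = b, t⁻¹bt = aba⁻¹⟩`. -/
def grels : Set (FreeGroup (Fin 3)) :=
  {(FreeGroup.of 2)⁻¹ * FreeGroup.of 0 * FreeGroup.of 2 * (FreeGroup.of 1)⁻¹,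
   (FreeGroup.of 2)⁻¹ * FreeGroup.of 1 * FreeGroup.of 2 *
     (FreeGroup.of 0 * FreeGroup.of 1 * (FreeGroup.of 0)⁻¹)⁻¹}

namespace Stmt5Aux

open SemidirectProduct Multiplicative

abbrev F3 := FreeGroup (Fin 3)

def thfun : Fin 3 → F3
  | 0 => FreeGroup.of 1
  | 1 => FreeGroup.of 2
  | 2 => (FreeGroup.of 1) ^ 2 * (FreeGroup.of 0)⁻¹

def thifun : Fin 3 → F3
  | 0 => (FreeGroup.of 2)⁻¹ * (FreeGroup.of 0) ^ 2
  | 1 => FreeGroup.of 0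
  | 2 => FreeGroup.of 1

def thhom : F3 →* F3 := FreeGroup.lift thfun
def thihom : F3 →* F3 := FreeGroup.lift thifun

lemma thc1 : thihom.comp thhom = MonoidHom.id F3 := by
  ext i
  fin_cases i <;> simp [thhom, thihom, thfun, thifun]

lemma thc2 : thhom.comp thihom = MonoidHom.id F3 := by
  ext i
  fin_cases i <;> simp [thhom, thihom, thfun, thifun]

def th : MulAut F3 := MonoidHom.toMulEquiv thhom thihom thc1 thc2

lemma th_apply (w : F3) : th w = thhom w := rfl
lemma thsymm_apply (w : F3) : th.symm w = thihom w := rfl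

lemma th0 : th (FreeGroup.of 0) = FreeGroup.of 1 := by
  rw [th_apply]; simp [thhom, thfun]
lemma th1 : th (FreeGroup.of 1) = FreeGroup.of 2 := by
  rw [th_apply]; simp [thhom, thfun]
lemma th2 : th (FreeGroup.of 2) = (FreeGroup.of 1) ^ 2 * (FreeGroup.of 0)⁻¹ := by
  rw [th_apply]; simp [thhom, thfun]

abbrev PG := PresentedGroup grels
abbrev H := F3 ⋊[zpowersHom (MulAut F3) th] Multiplicative ℤ

def aa : PG := .of 0
def bb : PG := .of 1
def tt : PG := .of 2

lemma relmem (r : FreeGroup (Fin 3)) (hr : r ∈ grels) :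
    PresentedGroup.mk grels r = 1 :=
  (QuotientGroup.eq_one_iff r).mpr (Subgroup.subset_normalClosure hr)

lemma rel1 : tt⁻¹ * aa * tt = bb := by
  have h := relmem _ (Set.mem_insert _ ({(FreeGroup.of 2)⁻¹ * FreeGroup.of 1 * FreeGroup.of 2 *
     (FreeGroup.of 0 * FreeGroup.of 1 * (FreeGroup.of 0)⁻¹)⁻¹} : Set (FreeGroup (Fin 3))))
  simp only [map_mul, map_inv] at h
  exact mul_inv_eq_one.mp h

lemma rel2 : tt⁻¹ * bb * tt = aa * bb * aa⁻¹ := by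
  have h := relmem ((FreeGroup.of 2)⁻¹ * FreeGroup.of 1 * FreeGroup.of 2 *
     (FreeGroup.of 0 * FreeGroup.of 1 * (FreeGroup.of 0)⁻¹)⁻¹)
     (Set.mem_insert_of_mem _ rfl)
  simp only [map_mul, map_inv] at h
  exact mul_inv_eq_one.mp h

/-! elements of `H` -/

def TT : H := inr (ofAdd (-1))
def AA : H := inl (FreeGroup.of 0) * TT
def BB : H := inl (FreeGroup.of 1) * TT

lemma TT_inv : (TT : H)⁻¹ = inr (ofAdd (1 : ℤ)) := by
  rw [TT, ← map_inv]
  congr 1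

lemma conjTT (n : F3) : (TT : H)⁻¹ * inl n * TT = inl (th n) := by
  have h := inl_aut (φ := zpowersHom (MulAut F3) th) (ofAdd (1 : ℤ)) n
  have h2 : (inr ((ofAdd (1 : ℤ))⁻¹) : H) = TT := by
    rw [TT]; congr 1
  rw [← TT_inv, h2] at h
  rw [← h]
  simp [zpowersHom_apply]

lemma conjTT' (n : F3) : (TT : H) * inl n * TT⁻¹ = inl (th.symm n) := by
  have h := conjTT (th.symm n)
  rw [th.apply_symm_apply] at h
  rw [← h]; group

lemma R1 : (TT : H)⁻¹ * AA * TT = BB := by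
  have e : (TT : H)⁻¹ * AA * TT = (TT⁻¹ * inl (FreeGroup.of 0) * TT) * TT := by
    rw [AA]; group
  rw [e, conjTT, th0, BB]

lemma R2 : (TT : H)⁻¹ * BB * TT = AA * BB * AA⁻¹ := by
  have hsym : th.symm (FreeGroup.of 1 * (FreeGroup.of 0)⁻¹)
      = FreeGroup.of 0 * ((FreeGroup.of 2)⁻¹ * (FreeGroup.of 0) ^ 2)⁻¹ := by
    rw [map_mul, map_inv, thsymm_apply, thsymm_apply]; simp [thihom, thifun]
  have hmerge : (FreeGroup.of 0 : F3) *
      (FreeGroup.of 0 * ((FreeGroup.of 2)⁻¹ * (FreeGroup.of 0) ^ 2)⁻¹) = FreeGroup.of 2 := by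
    group
  calc (TT : H)⁻¹ * BB * TT
      = (TT⁻¹ * inl (FreeGroup.of 1) * TT) * TT := by rw [BB]; group
    _ = inl (FreeGroup.of 2) * TT := by rw [conjTT, th1]
    _ = inl (FreeGroup.of 0 *
          (FreeGroup.of 0 * ((FreeGroup.of 2)⁻¹ * (FreeGroup.of 0) ^ 2)⁻¹)) * TT := by
        rw [hmerge]
    _ = inl (FreeGroup.of 0) *
          inl (FreeGroup.of 0 * ((FreeGroup.of 2)⁻¹ * (FreeGroup.of 0) ^ 2)⁻¹) * TT := by
        rw [map_mul inl]
    _ = inl (FreeGroup.of 0) *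
          (TT * inl (FreeGroup.of 1 * (FreeGroup.of 0)⁻¹) * TT⁻¹) * TT := by
        rw [conjTT', hsym]
    _ = AA * BB * AA⁻¹ := by
        rw [AA, BB, map_mul inl, map_inv inl]; group

def gfun : Fin 3 → H
  | 0 => AA
  | 1 => BB
  | 2 => TT

lemma hrels : ∀ r ∈ grels, FreeGroup.lift gfun r = 1 := by
  intro r hr
  rcases hr with h | h <;> subst h <;>
    simp only [map_mul, map_inv, FreeGroup.lift_apply_of, gfun] <;>
    rw [mul_inv_eq_one]
  · exact R1
  · exact R2

def φ : PG →* H := PresentedGroup.toGroup hrels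

def pfun : Fin 3 → PG
  | 0 => aa * tt⁻¹
  | 1 => tt⁻¹ * aa
  | 2 => tt⁻¹ * tt⁻¹ * aa * tt

def f₁ : F3 →* PG := FreeGroup.lift pfun
def f₂ : Multiplicative ℤ →* PG := zpowersHom PG tt⁻¹

lemma key1 (w : F3) : f₁ (th w) = tt⁻¹ * f₁ w * tt := by
  have h : f₁.comp thhom = ((MulAut.conj (tt⁻¹ : PG)).toMonoidHom).comp f₁ := by
    ext i
    fin_cases i <;>
      simp only [MonoidHom.comp_apply, MulEquiv.coe_toMonoidHom, MulAut.conj_apply] <;>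
      simp only [thhom, FreeGroup.lift_apply_of, thfun, f₁, pfun, map_mul, map_inv, map_pow]
    · show tt⁻¹ * aa = tt⁻¹ * (aa * tt⁻¹) * tt⁻¹⁻¹; group
    · show tt⁻¹ * tt⁻¹ * aa * tt = tt⁻¹ * (tt⁻¹ * aa) * tt⁻¹⁻¹; group
    · show (tt⁻¹ * aa) ^ 2 * (aa * tt⁻¹)⁻¹ = tt⁻¹ * (tt⁻¹ * tt⁻¹ * aa * tt) * tt⁻¹⁻¹
      calc (tt⁻¹ * aa) ^ 2 * (aa * tt⁻¹)⁻¹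
          = tt⁻¹ * aa * (tt⁻¹ * aa * tt) * aa⁻¹ := by rw [pow_two]; group
        _ = tt⁻¹ * (aa * bb * aa⁻¹) := by rw [rel1]; group
        _ = tt⁻¹ * (tt⁻¹ * bb * tt) := by rw [rel2]
        _ = tt⁻¹ * (tt⁻¹ * (tt⁻¹ * aa * tt) * tt) := by rw [rel1]
        _ = tt⁻¹ * (tt⁻¹ * tt⁻¹ * aa * tt) * tt⁻¹⁻¹ := by group
  have h2 := DFunLike.congr_fun h w
  simpa [MulAut.conj_apply, th_apply] using h2

lemma key2 (w : F3) : f₁ (th.symm w) = tt * f₁ w * tt⁻¹ := by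
  have h := key1 (th.symm w)
  rw [th.apply_symm_apply] at h
  rw [h]; group

lemma hinv (w : F3) : (th⁻¹ : MulAut F3) w = th.symm w := rfl

lemma keyz (n : ℤ) : ∀ w : F3,
    f₁ ((th ^ n) w) = tt⁻¹ ^ n * f₁ w * (tt⁻¹ ^ n)⁻¹ := by
  induction n using Int.induction_on with
  | zero => intro w; simp
  | succ k ih =>
      intro w
      rw [zpow_add_one, zpow_add_one, MulAut.mul_apply, ih (th w), key1]
      group
  | pred k ih =>
      intro w
      rw [zpow_sub_one, zpow_sub_one, MulAut.mul_apply, hinv, ih (th.symm w), key2]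
      group

lemma hcompat : ∀ g : Multiplicative ℤ,
    f₁.comp ((zpowersHom (MulAut F3) th g).toMonoidHom)
      = (MulAut.conj (f₂ g)).toMonoidHom.comp f₁ := by
  intro g
  refine MonoidHom.ext fun w => ?_
  simp only [MonoidHom.comp_apply, MulEquiv.coe_toMonoidHom, MulAut.conj_apply,
    zpowersHom_apply, f₂]
  exact keyz g.toAdd w

def ψ : H →* PG := SemidirectProduct.lift f₁ f₂ hcompat

lemma comp1 : ψ.comp φ = MonoidHom.id PG := by
  ext i
  fin_cases i <;>
    simp only [MonoidHom.comp_apply, MonoidHom.id_apply, φ, PresentedGroup.toGroup.of, gfun]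
  · show ψ AA = aa
    rw [AA, TT, map_mul, ψ, SemidirectProduct.lift_inl, SemidirectProduct.lift_inr]
    simp only [f₁, f₂, FreeGroup.lift_apply_of, pfun, zpowersHom_apply, toAdd_ofAdd,
      zpow_neg_one, inv_inv]
    group
  · show ψ BB = bb
    rw [BB, TT, map_mul, ψ, SemidirectProduct.lift_inl, SemidirectProduct.lift_inr]
    simp only [f₁, f₂, FreeGroup.lift_apply_of, pfun, zpowersHom_apply, toAdd_ofAdd,
      zpow_neg_one, inv_inv]
    exact rel1
  · show ψ TT = tt
    rw [TT, ψ, SemidirectProduct.lift_inr]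
    simp only [f₂, zpowersHom_apply, toAdd_ofAdd, zpow_neg_one, inv_inv]

lemma comp2 : φ.comp ψ = MonoidHom.id H := by
  apply SemidirectProduct.hom_ext
  · refine FreeGroup.ext_hom _ _ fun i => ?_
    fin_cases i <;>
      simp only [MonoidHom.comp_apply, MonoidHom.id_apply, ψ, SemidirectProduct.lift_inl,
        f₁, FreeGroup.lift_apply_of, pfun, map_mul, map_inv]
    · show φ aa * (φ tt)⁻¹ = inl (FreeGroup.of 0)
      rw [show φ aa = AA from PresentedGroup.toGroup.of hrels,
          show φ tt = TT from PresentedGroup.toGroup.of hrels, AA]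
      group
    · show (φ tt)⁻¹ * φ aa = inl (FreeGroup.of 1)
      rw [show φ aa = AA from PresentedGroup.toGroup.of hrels,
          show φ tt = TT from PresentedGroup.toGroup.of hrels, AA]
      have := conjTT (FreeGroup.of 0)
      rw [th0] at this
      rw [← this]; group
    · show (φ tt)⁻¹ * (φ tt)⁻¹ * φ aa * φ tt = inl (FreeGroup.of 2)
      rw [show φ aa = AA from PresentedGroup.toGroup.of hrels,
          show φ tt = TT from PresentedGroup.toGroup.of hrels, AA]
      have h0 := conjTT (FreeGroup.of 0)
      rw [th0] at h0
      have h1 := conjTT (FreeGroup.of 1)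
      rw [th1] at h1
      calc TT⁻¹ * TT⁻¹ * (inl (FreeGroup.of 0) * TT) * TT
          = TT⁻¹ * (TT⁻¹ * inl (FreeGroup.of 0) * TT) * TT := by group
        _ = TT⁻¹ * inl (FreeGroup.of 1) * TT := by rw [h0]
        _ = inl (FreeGroup.of 2) := h1
  · refine MonoidHom.ext_mint ?_
    simp only [MonoidHom.comp_apply, MonoidHom.id_apply, ψ, SemidirectProduct.lift_inr,
      f₂, zpowersHom_apply, toAdd_ofAdd, zpow_one, map_inv]
    rw [show φ tt = TT from PresentedGroup.toGroup.of hrels, TT_inv]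

def iso : PG ≃* H := MonoidHom.toMulEquiv φ ψ comp1 comp2

end Stmt5Aux

/-- `G ≅ F₃ ⋊_θ ℤ`, where `θ : x ↦ y, y ↦ z, z ↦ y²x⁻¹` (generators of the
free group of rank 3 are `0 = x`, `1 = y`, `2 = z`). -/
theorem stmt_5 :
    ∃ θ : MulAut (FreeGroup (Fin 3)),
      θ (FreeGroup.of 0) = FreeGroup.of 1 ∧
      θ (FreeGroup.of 1) = FreeGroup.of 2 ∧
      θ (FreeGroup.of 2) = (FreeGroup.of 1) ^ 2 * (FreeGroup.of 0)⁻¹ ∧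
      Nonempty (PresentedGroup grels ≃*
        FreeGroup (Fin 3) ⋊[zpowersHom _ θ] Multiplicative ℤ) := by
  exact ⟨Stmt5Aux.th, Stmt5Aux.th0, Stmt5Aux.th1, Stmt5Aux.th2, ⟨Stmt5Aux.iso⟩⟩
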